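/- Let t be a non-negative integer, let G be a t-connected chordal graph, and let τ be a threshold function for G with τ(u) ≤ t for every vertex u. For every clique C = {v_0, v_1, …, v_{t−1}} of order t in G, the function σ with σ(v_i) = τ(v_i) − i for i ∈ {0,…,t−1} and σ(u) = 0 otherwise is a partial incentive of (G, τ). -/

import Mathlib

open SimpleGraph

universe u

/-- `H` is closed under the activation rule: any vertex with at least `τ u` neighbors
in `H` belongs to `H`. -/
def HullClosed {V : Type u} (G : SimpleGraph V) (τ : V → ℤ) (H : Set V) : Prop :=
  ∀ u : V, (τ u ≤ ((G.neighborSet u ∩ H).ncard : ℤ)) → u ∈ H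

/-- The hull `H_{(G,τ)}(D)`: smallest superset of `D` closed under the activation rule. -/
def hull {V : Type u} (G : SimpleGraph V) (τ : V → ℤ) (D : Set V) : Set V :=
  ⋂₀ {H : Set V | D ⊆ H ∧ HullClosed G τ H}

/-- `D` is a dynamic monopoly (target set) of `(G,τ)`. -/
def IsDynMonopoly {V : Type u} (G : SimpleGraph V) (τ : V → ℤ) (D : Set V) : Prop :=
  hull G τ D = Set.univ

/-- `dyn(G,τ)`: minimum order of a dynamic monopoly. -/
noncomputable def dynNum {V : Type u} (G : SimpleGraph V) (τ : V → ℤ) : ℕ :=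
  sInf {k | ∃ D : Set V, IsDynMonopoly G τ D ∧ D.ncard = k}

/-- `σ` is a partial incentive of `(G,τ)`. -/
def IsPartialIncentive {V : Type u} (G : SimpleGraph V) (τ : V → ℤ) (σ : V → ℕ) : Prop :=
  hull G (fun u => τ u - σ u) ∅ = Set.univ

/-- `pi(G,τ)`: minimum weight of a partial incentive. -/
noncomputable def piNum {V : Type u} [Fintype V] (G : SimpleGraph V) (τ : V → ℤ) : ℕ :=
  sInf {k | ∃ σ : V → ℕ, IsPartialIncentive G τ σ ∧ ∑ u, σ u = k}

/-- `I` is a `κ`-degenerate set in `G`: there is a linear order of `I` in which every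
vertex has at most `κ u` neighbors among its predecessors. -/
def Degenerate {V : Type u} (G : SimpleGraph V) (κ : V → ℤ) (I : Set V) : Prop :=
  ∃ l : List V, l.Nodup ∧ {v | v ∈ l} = I ∧
    ∀ i : Fin l.length,
      ((G.neighborSet (l.get i) ∩ {w | w ∈ l.take (i : ℕ)}).ncard : ℤ) ≤ κ (l.get i)

/-- The graph `G'` of Lemma 1: for every edge `uv` of `G` add an independent set of
`n` new vertices adjacent exactly to `u` and `v`. -/
def lemma1Graph {V : Type u} (G : SimpleGraph V) (n : ℕ) :
    SimpleGraph (V ⊕ (G.edgeSet × Fin n)) :=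
  SimpleGraph.fromRel (fun x y =>
    match x, y with
    | Sum.inl a, Sum.inl b => G.Adj a b
    | Sum.inl a, Sum.inr e => a ∈ (e.1.1 : Sym2 V)
    | _, _ => False)

/-- The graph `G'` of Lemma 2: to every vertex `u` with `τ u > 0` attach a path `P_u`
of order `τ u`, joining `u` to all vertices of `P_u`. -/
def attachPaths {V : Type u} (G : SimpleGraph V) (τ : V → ℤ) :
    SimpleGraph (V ⊕ (Σ u : V, Fin (τ u).toNat)) :=
  SimpleGraph.fromRel (fun x y =>
    match x, y with
    | Sum.inl a, Sum.inl b => G.Adj a b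
    | Sum.inl a, Sum.inr s => a = s.1
    | Sum.inr s, Sum.inr t => s.1 = t.1 ∧ (s.2 : ℕ) + 1 = (t.2 : ℕ)
    | _, _ => False)

/-- `G` contains `H` as a minor. -/
def HasMinor {V : Type u} {W : Type} (G : SimpleGraph V) (H : SimpleGraph W) : Prop :=
  ∃ φ : W → Set V,
    (∀ w, (φ w).Nonempty) ∧
    (∀ w, (G.induce (φ w)).Connected) ∧
    (Pairwise fun w w' => Disjoint (φ w) (φ w')) ∧
    ∀ w w', H.Adj w w' → ∃ a ∈ φ w, ∃ b ∈ φ w', G.Adj a b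

/-- Planarity, via Wagner's theorem: no `K₅` minor and no `K_{3,3}` minor. -/
def IsPlanar {V : Type u} (G : SimpleGraph V) : Prop :=
  ¬ HasMinor G (completeGraph (Fin 5)) ∧
  ¬ HasMinor G (completeBipartiteGraph (Fin 3) (Fin 3))

/-- Chordality: every cycle of length at least four has a chord. -/
def IsChordal {V : Type u} (G : SimpleGraph V) : Prop :=
  ∀ ⦃v : V⦄ (c : G.Walk v v), c.IsCycle → 4 ≤ c.length →
    ∃ u w, u ∈ c.support ∧ w ∈ c.support ∧ G.Adj u w ∧ s(u, w) ∉ c.edges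

/-- `t`-connectedness: more than `t` vertices, and removing fewer than `t` vertices
leaves the graph connected. -/
def TConnected {V : Type u} [Fintype V] (G : SimpleGraph V) (t : ℕ) : Prop :=
  t < Fintype.card V ∧ ∀ S : Set V, S.ncard < t → (G.induce (Sᶜ)).Connected

/-- Outside neighbors `N⁺(A)` of `A`. -/
def Nplus {V : Type u} (G : SimpleGraph V) (A : Set V) : Set V :=
  {v | v ∉ A ∧ ∃ u ∈ A, G.Adj u v}

/-- Boundary `N⁻(B) = N⁺(V ∖ B)` of `B`. -/
def Nminus {V : Type u} (G : SimpleGraph V) (B : Set V) : Set V :=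
  Nplus G Bᶜ

/-- `B` is an `A`-strong region. -/
def StrongRegion {V : Type u} (G : SimpleGraph V) (τ : V → ℤ) (A B : Set V) : Prop :=
  ¬ B ⊆ hull G τ (A ∪ Nplus G B)

/-- `G` has a tree-decomposition of width at most `w`. -/
def HasTreeDecompOfWidthLE {V : Type u} (G : SimpleGraph V) (w : ℕ) : Prop :=
  ∃ (ι : Type) (T : SimpleGraph ι) (bag : ι → Set V),
    T.IsTree ∧
    (∀ v, ∃ t, v ∈ bag t) ∧
    (∀ u v, G.Adj u v → ∃ t, u ∈ bag t ∧ v ∈ bag t) ∧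
    (∀ v, (T.induce {t | v ∈ bag t}).Connected) ∧
    (∀ t, (bag t).ncard ≤ w + 1)



namespace Stmt6

variable {V : Type} {G : SimpleGraph V}

/-- `s` is simplicial within `W`. -/
def SimpIn (G : SimpleGraph V) (W : Set V) (s : V) : Prop :=
  s ∈ W ∧ ∀ x ∈ W, ∀ y ∈ W, G.Adj s x → G.Adj s y → x ≠ y → G.Adj x y

/-- reachability within a set `U`. -/
def ReachIn (G : SimpleGraph V) (U : Set V) (a b : V) : Prop :=
  ∃ p : G.Walk a b, ∀ z ∈ p.support, z ∈ U

/-- all separators have size ≥ t, relative to W. -/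
def SepGE (G : SimpleGraph V) (t : ℕ) (W : Set V) : Prop :=
  ∀ S : Set V, S.ncard < t → ∀ a ∈ W \ S, ∀ b ∈ W \ S, ReachIn G (W \ S) a b

lemma ReachIn.mono {U U' : Set V} (h : U ⊆ U') {a b : V} :
    ReachIn G U a b → ReachIn G U' a b := fun ⟨p, hp⟩ => ⟨p, fun z hz => h (hp z hz)⟩

lemma ReachIn.refl {U : Set V} {a : V} (ha : a ∈ U) : ReachIn G U a a :=
  ⟨Walk.nil, by simp [ha]⟩

lemma ReachIn.symm {U : Set V} {a b : V} : ReachIn G U a b → ReachIn G U b a :=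
  fun ⟨p, hp⟩ => ⟨p.reverse, fun z hz => hp z (by simpa using hz)⟩

lemma ReachIn.trans {U : Set V} {a b c : V} :
    ReachIn G U a b → ReachIn G U b c → ReachIn G U a c := by
  rintro ⟨p, hp⟩ ⟨q, hq⟩
  refine ⟨p.append q, fun z hz => ?_⟩
  rw [Walk.mem_support_append_iff] at hz
  exact hz.elim (hp z) (hq z)

lemma ReachIn.fst_mem {U : Set V} {a b : V} (h : ReachIn G U a b) : a ∈ U := by
  obtain ⟨p, hp⟩ := h; exact hp a p.start_mem_support

lemma ReachIn.snd_mem {U : Set V} {a b : V} (h : ReachIn G U a b) : b ∈ U := by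
  obtain ⟨p, hp⟩ := h; exact hp b p.end_mem_support

lemma ReachIn.adj {U : Set V} {a b c : V} (h : ReachIn G U a b) (hbc : G.Adj b c)
    (hc : c ∈ U) : ReachIn G U a c := by
  obtain ⟨p, hp⟩ := h
  refine ⟨p.append (Walk.cons hbc Walk.nil), fun z hz => ?_⟩
  rw [Walk.mem_support_append_iff] at hz
  rcases hz with hz | hz
  · exact hp z hz
  · simp at hz
    rcases hz with rfl | rfl
    · exact hp z p.end_mem_support
    · exact hc

/-- no walk between distinct nonadjacent vertices with support inside {a,b}. -/
lemma no_walk_pair {a b : V} (hab : a ≠ b) (hnadj : ¬ G.Adj a b)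
    (p : G.Walk a b) (hp : ∀ z ∈ p.support, z = a ∨ z = b) : False := by
  cases p with
  | nil => exact hab rfl
  | @cons _ c _ h q =>
    rcases hp c (by simp) with rfl | rfl
    · exact h.ne rfl
    · exact hnadj h

/-- shortcut: a chord on a walk yields a strictly shorter walk with support inside. -/
lemma shortcut [DecidableEq V] {x y : V} (P : G.Walk x y) :
    ∀ {u w : V}, u ∈ P.support → w ∈ P.support → G.Adj u w → s(u, w) ∉ P.edges →
    ∃ Q : G.Walk x y, (∀ z ∈ Q.support, z ∈ P.support) ∧ Q.length < P.length := by
  induction P with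
  | nil =>
    intro u w hu hw hadj _
    simp at hu hw
    subst hu; subst hw
    exact absurd rfl hadj.ne
  | @cons a c d h P' ih =>
    intro u w hu hw hadj he
    simp only [Walk.support_cons, List.mem_cons] at hu hw
    simp only [Walk.edges_cons, List.mem_cons] at he
    push_neg at he
    obtain ⟨he1, he2⟩ := he
    -- helper for the case u = a, w ∈ P'.support
    have key : ∀ {w' : V}, w' ∈ P'.support → G.Adj a w' → s(a, w') ≠ s(a, c) →
        ∃ Q : G.Walk a d, (∀ z ∈ Q.support, z = a ∨ z ∈ P'.support) ∧
          Q.length < (Walk.cons h P').length := by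
      intro w' hw' hadj' hne
      have hcw : c ≠ w' := by
        rintro rfl; exact hne rfl
      -- drop from P' until w'
      refine ⟨Walk.cons hadj' (P'.dropUntil w' hw'), ?_, ?_⟩
      · intro z hz
        simp only [Walk.support_cons, List.mem_cons] at hz
        rcases hz with rfl | hz
        · exact Or.inl rfl
        · exact Or.inr (Walk.support_dropUntil_subset _ _ hz)
      · simp only [Walk.length_cons, Nat.add_lt_add_iff_right, Nat.succ_lt_succ_iff]
        have hsplit := Walk.take_spec P' hw'
        have hlen : (P'.takeUntil w' hw').length + (P'.dropUntil w' hw').length = P'.length := by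
          rw [← Walk.length_append, hsplit]
        have htl : 1 ≤ (P'.takeUntil w' hw').length := by
          by_contra hcon
          push_neg at hcon
          interval_cases htake : (P'.takeUntil w' hw').length
          · exact hcw (Walk.eq_of_length_eq_zero htake)
        omega
    rcases hu with rfl | hu <;> rcases hw with rfl | hw
    · exact absurd rfl hadj.ne
    · -- u = a, w ∈ P'.support
      obtain ⟨Q, hQ, hlen⟩ := key hw hadj he1
      refine ⟨Q, fun z hz => ?_, hlen⟩
      rcases hQ z hz with rfl | hz'
      · simp
      · simp [hz']
    · -- w = a, u ∈ P'.support
      obtain ⟨Q, hQ, hlen⟩ := key hu hadj.symm (by rw [Sym2.eq_swap]; exact he1)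
      refine ⟨Q, fun z hz => ?_, hlen⟩
      rcases hQ z hz with rfl | hz'
      · simp
      · simp [hz']
    · -- both in P'
      obtain ⟨Q', hQ', hlen⟩ := ih hu hw hadj he2
      refine ⟨Walk.cons h Q', fun z hz => ?_, by simpa using hlen⟩
      simp only [Walk.support_cons, List.mem_cons] at hz ⊢
      rcases hz with rfl | hz
      · exact Or.inl rfl
      · exact Or.inr (hQ' z hz)


/-- reroute a walk around a vertex `s` whose neighborhood in `U` is a clique. -/
lemma reroute {U : Set V} {s : V}
    (hsimp : ∀ x y, x ∈ U → y ∈ U → G.Adj s x → G.Adj s y → x ≠ y → G.Adj x y) :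
    ∀ (n : ℕ) {a b : V} (p : G.Walk a b), p.length ≤ n → a ≠ s → b ≠ s →
      (∀ z ∈ p.support, z ∈ U ∪ {s}) → ReachIn G U a b := by
  intro n
  induction n with
  | zero =>
    intro a b p hlen ha hb hp
    cases p with
    | nil =>
      refine ⟨Walk.nil, fun w hw => ?_⟩
      simp only [Walk.support_nil, List.mem_singleton] at hw
      subst hw
      rcases hp _ Walk.nil.start_mem_support with h' | h'
      · exact h'
      · simp only [Set.mem_singleton_iff] at h'; exact absurd h' ha
    | cons h q => simp at hlen
  | succ n ih =>
    intro a b p hlen ha hb hp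
    cases p with
    | nil =>
      refine ⟨Walk.nil, fun w hw => ?_⟩
      simp only [Walk.support_nil, List.mem_singleton] at hw
      subst hw
      rcases hp _ Walk.nil.start_mem_support with h' | h'
      · exact h'
      · simp only [Set.mem_singleton_iff] at h'; exact absurd h' ha
    | @cons _ c _ h q =>
      have haU : a ∈ U := by
        rcases hp a (by simp) with h' | h'
        · exact h'
        · simp only [Set.mem_singleton_iff] at h'; exact absurd h' ha
      by_cases hcs : c = s
      · subst hcs
        -- now the old `s` is called `c`
        cases q with
        | nil => exact absurd rfl hb
        | @cons _ d _ h2 q2 =>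
          have hd : d ≠ c := h2.ne'
          have hdU : d ∈ U := by
            rcases hp d (by simp) with h' | h'
            · exact h'
            · simp only [Set.mem_singleton_iff] at h'; exact absurd h' hd
          have hq2 : ∀ z ∈ q2.support, z ∈ U ∪ {c} := by
            intro z hz; exact hp z (by simp [hz])
          have hlen2 : q2.length ≤ n := by
            simp only [Walk.length_cons] at hlen; omega
          by_cases had : a = d
          · subst had
            exact ih q2 hlen2 ha hb hq2
          · have hadj : G.Adj a d := hsimp a d haU hdU h.symm h2 had
            obtain ⟨r, hr⟩ := ih q2 hlen2 hd hb hq2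
            exact ⟨Walk.cons hadj r, fun z hz => by
              simp only [Walk.support_cons, List.mem_cons] at hz
              rcases hz with rfl | hz
              · exact haU
              · exact hr z hz⟩
      · have hq : ∀ z ∈ q.support, z ∈ U ∪ {s} := by
          intro z hz; exact hp z (by simp [hz])
        have hlq : q.length ≤ n := by simp only [Walk.length_cons] at hlen; omega
        obtain ⟨r, hr⟩ := ih q hlq hcs hb hq
        exact ⟨Walk.cons h r, fun z hz => by
          simp only [Walk.support_cons, List.mem_cons] at hz
          rcases hz with rfl | hz
          · exact haU
          · exact hr z hz⟩


/-- deleting a simplicial vertex preserves the separation property. -/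
lemma sep_del {t : ℕ} {W : Set V} {s : V} (hsep : SepGE G t W) (hs : SimpIn G W s) :
    SepGE G t (W \ {s}) := by
  intro S hS a ha b hb
  have ha' : a ∈ W \ S := ⟨ha.1.1, ha.2⟩
  have hb' : b ∈ W \ S := ⟨hb.1.1, hb.2⟩
  obtain ⟨p, hp⟩ := hsep S hS a ha' b hb'
  have has : a ≠ s := fun e => ha.1.2 (by simp [e])
  have hbs : b ≠ s := fun e => hb.1.2 (by simp [e])
  refine reroute (U := (W \ {s}) \ S) ?_ p.length p le_rfl has hbs ?_
  · intro x y hx hy hsx hsy hxy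
    exact hs.2 x hx.1.1 y hy.1.1 hsx hsy hxy
  · intro z hz
    by_cases hzs : z = s
    · simp [hzs]
    · exact Or.inl ⟨⟨(hp z hz).1, hzs⟩, (hp z hz).2⟩

/-- minimum relative degree is at least `t`. -/
lemma mindeg [Fintype V] {t : ℕ} {W : Set V} {s : V} (hsep : SepGE G t W)
    (hcard : t + 1 ≤ W.ncard) (hs : s ∈ W) :
    t ≤ (G.neighborSet s ∩ W).ncard := by
  by_contra hcon
  push_neg at hcon
  set S := G.neighborSet s ∩ W with hSdef
  have hsS : s ∉ S := fun h => G.irrefl h.1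
  have hsW : s ∈ W \ S := ⟨hs, hsS⟩
  -- find b ∈ W \ S with b ≠ s
  have hWS : 2 ≤ (W \ S).ncard := by
    have h1 : W.ncard ≤ (W \ S).ncard + S.ncard :=
      Set.ncard_le_ncard_diff_add_ncard W S (Set.toFinite S)
    omega
  obtain ⟨b, hb, hbs⟩ := Set.exists_ne_of_one_lt_ncard (s := W \ S) (by omega) s
  obtain ⟨p, hp⟩ := hsep S hcon s hsW b hb
  cases p with
  | nil => exact hbs rfl
  | @cons _ c _ h q =>
    have hc : c ∈ W \ S := hp c (by simp)
    exact hc.2 ⟨h, hc.1⟩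


lemma adj_of_length_one {x y : V} (p : G.Walk x y) (h : p.length = 1) : G.Adj x y := by
  cases p with
  | nil => simp at h
  | @cons _ c _ hadj q =>
    simp only [Walk.length_cons, Nat.add_eq_right] at h
    have := q.eq_of_length_eq_zero h
    subst this
    exact hadj

lemma two_paths_adj [DecidableEq V] (hch : IsChordal G) {x y : V} (hxy : x ≠ y)
    {A B : Set V}
    (hdisj : ∀ a ∈ A, a ∉ B)
    (hnoedge : ∀ a ∈ A, ∀ b ∈ B, ¬ G.Adj a b)
    (hxA : x ∉ A) (hyA : y ∉ A) (hxB : x ∉ B) (hyB : y ∉ B)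
    (hA : ∃ P : G.Walk x y, ∀ z ∈ P.support, z = x ∨ z = y ∨ z ∈ A)
    (hB : ∃ P : G.Walk x y, ∀ z ∈ P.support, z = x ∨ z = y ∨ z ∈ B) :
    G.Adj x y := by
  by_contra hnadj
  -- minimal paths in each side
  have minpath : ∀ C : Set V,
      (∃ P : G.Walk x y, ∀ z ∈ P.support, z = x ∨ z = y ∨ z ∈ C) →
      ∃ P : G.Walk x y, P.IsPath ∧ (∀ z ∈ P.support, z = x ∨ z = y ∨ z ∈ C) ∧
        2 ≤ P.length ∧
        (∀ Q : G.Walk x y, Q.IsPath → (∀ z ∈ Q.support, z = x ∨ z = y ∨ z ∈ C) →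
          P.length ≤ Q.length) := by
    intro C hC
    set LS := {n | ∃ P : G.Walk x y, P.IsPath ∧
      (∀ z ∈ P.support, z = x ∨ z = y ∨ z ∈ C) ∧ P.length = n} with hLS
    have hne : LS.Nonempty := by
      obtain ⟨P, hP⟩ := hC
      exact ⟨P.bypass.length, P.bypass, P.bypass_isPath,
        fun z hz => hP z (P.support_bypass_subset hz), rfl⟩
    obtain ⟨P, hPpath, hPsup, hPlen⟩ := Nat.sInf_mem hne
    refine ⟨P, hPpath, hPsup, ?_, ?_⟩
    · rcases Nat.lt_or_ge P.length 2 with hl | hl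
      · interval_cases hll : P.length
        · exact absurd (P.eq_of_length_eq_zero hll) hxy
        · exact absurd (adj_of_length_one P hll) hnadj
      · exact hl
    · intro Q hQ hQsup
      rw [hPlen]
      exact Nat.sInf_le ⟨Q, hQ, hQsup, rfl⟩
  obtain ⟨P1, hP1path, hP1sup, hP1two, hP1min⟩ := minpath A hA
  obtain ⟨P2, hP2path, hP2sup, hP2two, hP2min⟩ := minpath B hB
  set c : G.Walk x x := P1.append P2.reverse with hc
  -- edge disjointness of the two paths
  have hedisj : ∀ e ∈ P1.edges, e ∉ P2.edges := by
    intro e he1 he2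
    induction e using Sym2.ind with
    | _ u v =>
      have hu1 : u ∈ P1.support := P1.fst_mem_support_of_mem_edges he1
      have hv1 : v ∈ P1.support := P1.snd_mem_support_of_mem_edges he1
      have hu2 : u ∈ P2.support := P2.fst_mem_support_of_mem_edges he2
      have hv2 : v ∈ P2.support := P2.snd_mem_support_of_mem_edges he2
      have hadj : G.Adj u v := P1.adj_of_mem_edges he1
      have hu : u = x ∨ u = y := by
        rcases hP1sup u hu1 with h | h | h
        · exact Or.inl h
        · exact Or.inr h
        · rcases hP2sup u hu2 with h' | h' | h'
          · exact Or.inl h'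
          · exact Or.inr h'
          · exact absurd h' (hdisj u h)
      have hv : v = x ∨ v = y := by
        rcases hP1sup v hv1 with h | h | h
        · exact Or.inl h
        · exact Or.inr h
        · rcases hP2sup v hv2 with h' | h' | h'
          · exact Or.inl h'
          · exact Or.inr h'
          · exact absurd h' (hdisj v h)
      rcases hu with rfl | rfl <;> rcases hv with rfl | rfl
      · exact hadj.ne rfl
      · exact hnadj hadj
      · exact hnadj hadj.symm
      · exact hadj.ne rfl
  -- support tail facts
  obtain ⟨t1, ht1⟩ : ∃ t1, P1.support = x :: t1 := ⟨P1.support.tail, P1.support_eq_cons⟩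
  obtain ⟨t2, ht2⟩ : ∃ t2, P2.reverse.support = y :: t2 := ⟨_, P2.reverse.support_eq_cons⟩
  have hxt1 : x ∉ t1 := by
    have := hP1path.support_nodup
    rw [ht1] at this
    exact (List.nodup_cons.mp this).1
  have hyt2 : y ∉ t2 := by
    have : P2.reverse.support.Nodup := by
      rw [Walk.support_reverse]
      exact List.nodup_reverse.mpr hP2path.support_nodup
    rw [ht2] at this
    exact (List.nodup_cons.mp this).1
  have ht1sub : ∀ z ∈ t1, z ∈ P1.support := by
    intro z hz; rw [ht1]; exact List.mem_cons_of_mem _ hz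
  have ht2sub : ∀ z ∈ t2, z ∈ P2.support := by
    intro z hz
    have : z ∈ P2.reverse.support := by rw [ht2]; exact List.mem_cons_of_mem _ hz
    rw [Walk.support_reverse, List.mem_reverse] at this
    exact this
  -- c is a cycle
  have hcyc : c.IsCycle := by
    refine ⟨⟨⟨?_⟩, ?_⟩, ?_⟩
    · -- edges nodup
      rw [Walk.edges_append, Walk.edges_reverse]
      refine List.Nodup.append hP1path.isTrail.edges_nodup
        (List.nodup_reverse.mpr hP2path.isTrail.edges_nodup) ?_
      intro e he1 he2
      rw [List.mem_reverse] at he2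
      exact hedisj e he1 he2
    · -- ≠ nil
      intro h
      have := congrArg Walk.length h
      rw [Walk.length_append] at this
      simp only [Walk.length_reverse, Walk.length_nil] at this
      omega
    · -- support tail nodup
      have hsupp : c.support = P1.support ++ t2 := by
        rw [hc, Walk.support_append, ht2]
        simp
      rw [hsupp, ht1, List.cons_append, List.tail_cons]
      refine List.Nodup.append ?_ ?_ ?_
      · have := hP1path.support_nodup
        rw [ht1] at this
        exact (List.nodup_cons.mp this).2
      · have : P2.reverse.support.Nodup := by
          rw [Walk.support_reverse]
          exact List.nodup_reverse.mpr hP2path.support_nodup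
        rw [ht2] at this
        exact (List.nodup_cons.mp this).2
      · intro z hz1 hz2
        have hz1' : z ∈ P1.support := ht1sub z hz1
        have hz2' : z ∈ P2.support := ht2sub z hz2
        have hzx : z ≠ x := fun e => hxt1 (e ▸ hz1)
        have hzy : z ≠ y := fun e => hyt2 (e ▸ hz2)
        rcases hP1sup z hz1' with h | h | h
        · exact hzx h
        · exact hzy h
        · rcases hP2sup z hz2' with h' | h' | h'
          · exact hzx h'
          · exact hzy h'
          · exact hdisj z h h'
  have hclen : 4 ≤ c.length := by
    rw [hc, Walk.length_append, Walk.length_reverse]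
    omega
  obtain ⟨u, w, hu, hw, huw, hes⟩ := hch c hcyc hclen
  -- membership split
  have memsplit : ∀ z, z ∈ c.support → z ∈ P1.support ∨ z ∈ P2.support := by
    intro z hz
    rw [hc, Walk.mem_support_append_iff] at hz
    rcases hz with hz | hz
    · exact Or.inl hz
    · right
      rw [Walk.support_reverse, List.mem_reverse] at hz
      exact hz
  have hne1 : s(u, w) ∉ P1.edges := by
    intro h
    exact hes (by rw [hc, Walk.edges_append]; exact List.mem_append_left _ h)
  have hne2 : s(u, w) ∉ P2.edges := by
    intro h
    apply hes
    rw [hc, Walk.edges_append]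
    refine List.mem_append_right _ ?_
    rw [Walk.edges_reverse, List.mem_reverse]
    exact h
  have contra1 : u ∈ P1.support → w ∈ P1.support → False := by
    intro h1 h2
    obtain ⟨Q, hQsup, hQlen⟩ := shortcut P1 h1 h2 huw hne1
    have hbp : P1.length ≤ Q.bypass.length :=
      hP1min Q.bypass Q.bypass_isPath
        (fun z hz => hP1sup z (hQsup z (Q.support_bypass_subset hz)))
    have := Q.length_bypass_le
    omega
  have contra2 : u ∈ P2.support → w ∈ P2.support → False := by
    intro h1 h2
    obtain ⟨Q, hQsup, hQlen⟩ := shortcut P2 h1 h2 huw hne2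
    have hbp : P2.length ≤ Q.bypass.length :=
      hP2min Q.bypass Q.bypass_isPath
        (fun z hz => hP2sup z (hQsup z (Q.support_bypass_subset hz)))
    have := Q.length_bypass_le
    omega
  have cross : ∀ u' w', G.Adj u' w' → u' ∈ P1.support → u' ∉ P2.support →
      w' ∈ P2.support → w' ∉ P1.support → False := by
    intro u' w' hadj h1 h2 h3 h4
    have hu'A : u' ∈ A := by
      rcases hP1sup u' h1 with h | h | h
      · exact absurd (h ▸ P2.start_mem_support) h2
      · exact absurd (h ▸ P2.end_mem_support) h2
      · exact h
    have hw'B : w' ∈ B := by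
      rcases hP2sup w' h3 with h | h | h
      · exact absurd (h ▸ P1.start_mem_support) h4
      · exact absurd (h ▸ P1.end_mem_support) h4
      · exact h
    exact hnoedge u' hu'A w' hw'B hadj
  rcases memsplit u hu with hu1 | hu2 <;> rcases memsplit w hw with hw1 | hw2
  · exact contra1 hu1 hw1
  · by_cases h2 : u ∈ P2.support
    · exact contra2 h2 hw2
    · by_cases h4 : w ∈ P1.support
      · exact contra1 hu1 h4
      · exact cross u w huw hu1 h2 hw2 h4
  · by_cases h2 : w ∈ P2.support
    · exact contra2 hu2 h2
    · by_cases h4 : u ∈ P1.support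
      · exact contra1 h4 hw1
      · exact cross w u huw.symm hw1 h2 hu2 h4
  · exact contra2 hu2 hw2


/-- every vertex of a minimal separator has a neighbor in the `a`-side component. -/
lemma min_nbr_aux [Fintype V] [DecidableEq V] {W S : Set V} {a b v : V}
    (haW : a ∈ W) (hS : S ⊆ W \ {a, b})
    (hnreach : ¬ ReachIn G (W \ S) a b)
    (hmin : ∀ S' : Set V, S' ⊆ W \ {a, b} → ¬ ReachIn G (W \ S') a b →
      S.ncard ≤ S'.ncard)
    (hv : v ∈ S) : ∃ u, ReachIn G (W \ S) a u ∧ G.Adj v u := by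
  by_contra hno
  push_neg at hno
  have hS' : ¬ (S \ {v} ⊆ W \ {a, b} ∧ ¬ ReachIn G (W \ (S \ {v})) a b) := by
    rintro ⟨h1, h2⟩
    have := hmin _ h1 h2
    have := Set.ncard_diff_singleton_lt_of_mem hv (Set.toFinite S)
    omega
  have hsub : S \ {v} ⊆ W \ {a, b} := fun z hz => hS hz.1
  have hreach : ReachIn G (W \ (S \ {v})) a b := by
    by_contra h
    exact hS' ⟨hsub, h⟩
  obtain ⟨p, hp⟩ := hreach
  have hvp : v ∈ p.support := by
    by_contra hvp
    refine hnreach ⟨p, fun z hz => ?_⟩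
    have hz' := hp z hz
    refine ⟨hz'.1, fun hzS => ?_⟩
    refine hz'.2 ⟨hzS, fun he => hvp ?_⟩
    rw [Set.mem_singleton_iff] at he
    rw [← he]; exact hz
  -- take the walk until the first visit of v
  set q := p.takeUntil v hvp with hq
  have hqsup : ∀ z ∈ q.support, z ∈ W \ (S \ {v}) :=
    fun z hz => hp z (p.support_takeUntil_subset hvp hz)
  have hcount : q.support.count v = 1 := p.count_support_takeUntil_eq_one hvp
  have hva : v ≠ a := fun he => (hS hv).2 (by simp [he])
  cases hqr : q.reverse with
  | nil =>
    exact hva (q.reverse.eq_of_length_eq_zero (by rw [hqr]; rfl))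
  | @cons _ u _ h2 r =>
    have hsupeq : q.support.reverse = v :: r.support := by
      rw [← Walk.support_reverse, hqr, Walk.support_cons]
    have hvr : v ∉ r.support := by
      have : (q.support.reverse).count v = 1 := by
        rw [List.count_reverse]; exact hcount
      rw [hsupeq] at this
      simp only [List.count_cons_self] at this
      intro hmem
      have := List.count_pos_iff.mpr hmem
      omega
    have hrsup : ∀ z ∈ r.support, z ∈ W \ S := by
      intro z hz
      have hz1 : z ∈ q.support := by
        rw [← List.mem_reverse, hsupeq]
        exact List.mem_cons_of_mem _ hz
      have hz2 := hqsup z hz1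
      refine ⟨hz2.1, fun hzS => ?_⟩
      refine hz2.2 ⟨hzS, fun he => hvr ?_⟩
      rw [Set.mem_singleton_iff] at he
      rw [← he]; exact hz
    refine hno u ⟨r.reverse, fun z hz => ?_⟩ h2
    rw [Walk.support_reverse, List.mem_reverse] at hz
    exact hrsup z hz


lemma dirac [Fintype V] [DecidableEq V] (hch : IsChordal G) :
    ∀ (n : ℕ) (W : Set V), W.ncard ≤ n → W.Nonempty →
      (∀ x ∈ W, ∀ y ∈ W, x ≠ y → G.Adj x y) ∨
      ∃ s1 s2, s1 ∈ W ∧ s2 ∈ W ∧ s1 ≠ s2 ∧ ¬ G.Adj s1 s2 ∧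
        SimpIn G W s1 ∧ SimpIn G W s2 := by
  intro n
  induction n with
  | zero =>
    intro W hcard hne
    have := (Set.ncard_pos (Set.toFinite W)).mpr hne
    omega
  | succ n ih =>
    intro W hWcard hWne
    by_cases hcomp : ∀ x ∈ W, ∀ y ∈ W, x ≠ y → G.Adj x y
    · exact Or.inl hcomp
    right
    push_neg at hcomp
    obtain ⟨a, ha, b, hb, hab, hnadj⟩ := hcomp
    have h0 : (W \ {a, b}) ⊆ W \ {a, b} ∧ ¬ ReachIn G (W \ (W \ {a, b})) a b := by
      refine ⟨le_refl _, ?_⟩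
      rintro ⟨p, hp⟩
      refine no_walk_pair hab hnadj p (fun z hz => ?_)
      rcases hp z hz with ⟨h1, h2⟩
      by_contra hcon
      push_neg at hcon
      exact h2 ⟨h1, by simp [hcon.1, hcon.2]⟩
    set KS := {k | ∃ S : Set V, (S ⊆ W \ {a, b} ∧ ¬ ReachIn G (W \ S) a b) ∧ S.ncard = k}
      with hKS
    have hKSne : KS.Nonempty := ⟨_, _, h0, rfl⟩
    obtain ⟨S, hS, hScard⟩ := Nat.sInf_mem hKSne
    have hmin : ∀ S' : Set V, S' ⊆ W \ {a, b} → ¬ ReachIn G (W \ S') a b →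
        S.ncard ≤ S'.ncard := by
      intro S' h1 h2
      rw [hScard]
      exact Nat.sInf_le ⟨S', ⟨h1, h2⟩, rfl⟩
    obtain ⟨hSsub, hSnreach⟩ := hS
    have haS : a ∉ S := fun h => (hSsub h).2 (by simp)
    have hbS : b ∉ S := fun h => (hSsub h).2 (by simp)
    have haWS : a ∈ W \ S := ⟨ha, haS⟩
    have hbWS : b ∈ W \ S := ⟨hb, hbS⟩
    set A := {z | ReachIn G (W \ S) a z} with hA
    set B := {z | ReachIn G (W \ S) b z} with hB
    have haA : a ∈ A := ReachIn.refl haWS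
    have hbB : b ∈ B := ReachIn.refl hbWS
    have hAsub : A ⊆ W \ S := fun z hz => hz.snd_mem
    have hBsub : B ⊆ W \ S := fun z hz => hz.snd_mem
    have hABdisj : ∀ z ∈ A, z ∉ B := fun z hzA hzB => hSnreach (hzA.trans hzB.symm)
    have hAclosed : ∀ z ∈ A, ∀ x ∈ W \ S, G.Adj z x → x ∈ A :=
      fun z hz x hx hadj => hz.adj hadj hx
    have hBclosed : ∀ z ∈ B, ∀ x ∈ W \ S, G.Adj z x → x ∈ B :=
      fun z hz x hx hadj => hz.adj hadj hx
    have hABnoedge : ∀ z ∈ A, ∀ x ∈ B, ¬ G.Adj z x :=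
      fun z hz x hx hadj => hABdisj x (hAclosed z hz x (hBsub hx) hadj) hx
    have hnbrA : ∀ v ∈ S, ∃ u ∈ A, G.Adj v u := by
      intro v hv
      obtain ⟨u, hu, hadj⟩ := min_nbr_aux ha hSsub hSnreach hmin hv
      exact ⟨u, hu, hadj⟩
    have hnbrB : ∀ v ∈ S, ∃ u ∈ B, G.Adj v u := by
      intro v hv
      have hsub' : S ⊆ W \ {b, a} := by rw [Set.pair_comm]; exact hSsub
      have hnr' : ¬ ReachIn G (W \ S) b a := fun h => hSnreach h.symm
      have hmin' : ∀ S' : Set V, S' ⊆ W \ {b, a} → ¬ ReachIn G (W \ S') b a →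
          S.ncard ≤ S'.ncard := by
        intro S' h1 h2
        exact hmin S' (by rw [Set.pair_comm]; exact h1) (fun h => h2 h.symm)
      obtain ⟨u, hu, hadj⟩ := min_nbr_aux hb hsub' hnr' hmin' hv
      exact ⟨u, hu, hadj⟩
    have hSclique : ∀ x ∈ S, ∀ y ∈ S, x ≠ y → G.Adj x y := by
      intro x hx y hy hxy
      obtain ⟨u1, hu1A, hxu1⟩ := hnbrA x hx
      obtain ⟨u2, hu2A, hyu2⟩ := hnbrA y hy
      obtain ⟨w1, hw1B, hxw1⟩ := hnbrB x hx
      obtain ⟨w2, hw2B, hyw2⟩ := hnbrB y hy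
      have hpath : ∀ (c0 c1 c2 : V) (hc1 : ReachIn G (W \ S) c0 c1)
          (hc2 : ReachIn G (W \ S) c0 c2), G.Adj x c1 → G.Adj y c2 →
          ∃ P : G.Walk x y, ∀ z ∈ P.support, z = x ∨ z = y ∨
            z ∈ {z' | ReachIn G (W \ S) c0 z'} := by
        intro c0 c1 c2 hc1 hc2 hxc1 hyc2
        obtain ⟨q, hq⟩ := (hc1.symm.trans hc2 : ReachIn G (W \ S) c1 c2)
        have hqC : ∀ z ∈ q.support, ReachIn G (W \ S) c0 z := by
          intro z hz
          exact hc1.trans ⟨q.takeUntil z hz, fun w hw =>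
            hq w (q.support_takeUntil_subset hz hw)⟩
        refine ⟨Walk.cons hxc1 (q.append (Walk.cons hyc2.symm Walk.nil)), ?_⟩
        intro z hz
        simp only [Walk.support_cons, List.mem_cons] at hz
        rcases hz with rfl | hz
        · exact Or.inl rfl
        · rw [Walk.mem_support_append_iff] at hz
          rcases hz with hz | hz
          · exact Or.inr (Or.inr (hqC z hz))
          · simp only [Walk.support_cons, Walk.support_nil, List.mem_cons,
              List.mem_singleton] at hz
            rcases hz with rfl | hz
            · exact Or.inr (Or.inr (hqC _ q.end_mem_support))
            · rcases hz with rfl | h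
              · exact Or.inr (Or.inl rfl)
              · simp at h
      have hxA' : x ∉ A := fun h => (hAsub h).2 hx
      have hyA' : y ∉ A := fun h => (hAsub h).2 hy
      have hxB' : x ∉ B := fun h => (hBsub h).2 hx
      have hyB' : y ∉ B := fun h => (hBsub h).2 hy
      exact two_paths_adj hch hxy hABdisj hABnoedge hxA' hyA' hxB' hyB'
        (hpath a u1 u2 hu1A hu2A hxu1 hyu2) (hpath b w1 w2 hw1B hw2B hxw1 hyw2)
    have findSimp : ∀ (C : Set V) (c0 : V), c0 ∈ C → C ⊆ W \ S →
        (∀ z ∈ C, ∀ x ∈ W \ S, G.Adj z x → x ∈ C) →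
        (∃ w0 ∈ W, w0 ∉ C ∪ S) →
        ∃ s0 ∈ C, SimpIn G W s0 := by
      rintro C c0 hc0 hCsub hCclosed ⟨w0, hw0W, hw0⟩
      have hCS : C ∪ S ⊆ W := fun z hz =>
        hz.elim (fun h => (hCsub h).1) (fun h => (hSsub h).1)
      have hssub : C ∪ S ⊂ W := Set.ssubset_iff_subset_ne.mpr
        ⟨hCS, fun he => hw0 (he ▸ hw0W)⟩
      have hcard : (C ∪ S).ncard ≤ n := by
        have := Set.ncard_lt_ncard hssub (Set.toFinite W)
        omega
      have hnbrin : ∀ s0 ∈ C, ∀ x ∈ W, G.Adj s0 x → x ∈ C ∪ S := by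
        intro s0 hs0 x hx hadj
        by_cases hxS : x ∈ S
        · exact Or.inr hxS
        · exact Or.inl (hCclosed s0 hs0 x ⟨hx, hxS⟩ hadj)
      rcases ih (C ∪ S) hcard ⟨c0, Or.inl hc0⟩ with hcomp1 |
        ⟨s1, s2, hs1, hs2, hs12, hnadj12, hsimp1, hsimp2⟩
      · refine ⟨c0, hc0, hCS (Or.inl hc0), ?_⟩
        intro x hx y hy hax hay hxy
        exact hcomp1 x (hnbrin c0 hc0 x hx hax) y (hnbrin c0 hc0 y hy hay) hxy
      · have hor : s1 ∉ S ∨ s2 ∉ S := by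
          by_contra hcon
          push_neg at hcon
          exact hnadj12 (hSclique s1 hcon.1 s2 hcon.2 hs12)
        obtain ⟨s0, hs0C, hsimp0⟩ : ∃ s0, s0 ∈ C ∧ SimpIn G (C ∪ S) s0 := by
          rcases hor with h | h
          · exact ⟨s1, hs1.resolve_right h, hsimp1⟩
          · exact ⟨s2, hs2.resolve_right h, hsimp2⟩
        refine ⟨s0, hs0C, hCS (Or.inl hs0C), ?_⟩
        intro x hx y hy hax hay hxy
        exact hsimp0.2 x (hnbrin s0 hs0C x hx hax) y (hnbrin s0 hs0C y hy hay)
          hax hay hxy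
    obtain ⟨sA, hsAA, hsimpA⟩ := findSimp A a haA hAsub hAclosed
      ⟨b, hb, fun h => h.elim (fun h' => hABdisj b h' hbB) hbS⟩
    obtain ⟨sB, hsBB, hsimpB⟩ := findSimp B b hbB hBsub hBclosed
      ⟨a, ha, fun h => h.elim (fun h' => hABdisj a haA h') haS⟩
    exact ⟨sA, sB, hsimpA.1, hsimpB.1, fun he => hABdisj sA hsAA (he ▸ hsBB),
      hABnoedge sA hsAA sB hsBB, hsimpA, hsimpB⟩


lemma sepge_univ [Fintype V] {t : ℕ} (hcon : TConnected G t) :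
    SepGE G t (Set.univ : Set V) := by
  intro S hS a ha b hb
  have hconn := hcon.2 S hS
  have ha' : a ∈ (Sᶜ : Set V) := ha.2
  have hb' : b ∈ (Sᶜ : Set V) := hb.2
  obtain ⟨p⟩ := hconn.preconnected ⟨a, ha'⟩ ⟨b, hb'⟩
  refine ⟨p.map (SimpleGraph.Embedding.induce (Sᶜ : Set V)).toHom, ?_⟩
  intro z hz
  change z ∈ (p.map (SimpleGraph.Embedding.induce (Sᶜ : Set V)).toHom).support at hz
  rw [Walk.support_map, List.mem_map] at hz
  obtain ⟨⟨z', hz'⟩, _, rfl⟩ := hz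
  exact ⟨trivial, hz'⟩

lemma main [Fintype V] [DecidableEq V] (hch : IsChordal G) (t : ℕ) (τ : V → ℤ)
    (hτ : ∀ u, τ u ≤ (t : ℤ)) :
    ∀ (n : ℕ) (W H : Set V) (v' : Fin t → V), W.ncard ≤ n → H ⊆ W →
      (∀ i, v' i ∈ H) → Function.Injective v' →
      (∀ i j, i ≠ j → G.Adj (v' i) (v' j)) →
      SepGE G t W →
      (∀ u ∈ W \ H, ((G.neighborSet u ∩ H).ncard : ℤ) < τ u) →
      W \ H = ∅ := by
  intro n
  induction n with
  | zero =>
    intro W H v' hWcard hHW hvH hinj hclique hsep hviol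
    by_contra hne
    obtain ⟨u0, hu0⟩ := Set.nonempty_iff_ne_empty.mpr hne
    have := (Set.ncard_pos (Set.toFinite W)).mpr ⟨u0, hu0.1⟩
    omega
  | succ n ih =>
    intro W H v' hWcard hHW hvH hinj hclique hsep hviol
    by_contra hne
    obtain ⟨u0, hu0⟩ := Set.nonempty_iff_ne_empty.mpr hne
    have hrange : Set.range v' ⊆ H := by rintro _ ⟨i, rfl⟩; exact hvH i
    have hHt : t ≤ H.ncard := by
      have h1 : (Set.range v').ncard = t := by
        rw [← Set.image_univ, Set.ncard_image_of_injective _ hinj, Set.ncard_univ,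
          Nat.card_eq_fintype_card, Fintype.card_fin]
      calc t = (Set.range v').ncard := h1.symm
        _ ≤ H.ncard := Set.ncard_le_ncard hrange (Set.toFinite H)
    have hWt : t + 1 ≤ W.ncard := by
      have hins : insert u0 H ⊆ W := Set.insert_subset hu0.1 hHW
      have h2 : (insert u0 H).ncard = H.ncard + 1 :=
        Set.ncard_insert_of_notMem hu0.2 (Set.toFinite H)
      have h3 := Set.ncard_le_ncard hins (Set.toFinite W)
      omega
    rcases dirac hch W.ncard W le_rfl ⟨u0, hu0.1⟩ with hcomp |
      ⟨s1, s2, hs1W, hs2W, hs12, hnadj, hsimp1, hsimp2⟩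
    · have hsub : H ⊆ G.neighborSet u0 ∩ H := fun h hh =>
        ⟨hcomp u0 hu0.1 h (hHW hh) (fun he => hu0.2 (he ▸ hh)), hh⟩
      have h1 : t ≤ (G.neighborSet u0 ∩ H).ncard :=
        le_trans hHt (Set.ncard_le_ncard hsub (Set.toFinite _))
      have h2 := hviol u0 hu0
      have h3 := hτ u0
      have h1' : (t : ℤ) ≤ ((G.neighborSet u0 ∩ H).ncard : ℤ) := by exact_mod_cast h1
      omega
    · have hpick : ∃ s, SimpIn G W s ∧ ∀ i, v' i ≠ s := by
        by_cases h1 : ∀ i, v' i ≠ s1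
        · exact ⟨s1, hsimp1, h1⟩
        · push_neg at h1
          obtain ⟨i, hi⟩ := h1
          refine ⟨s2, hsimp2, fun j hj => ?_⟩
          have hij : i ≠ j := fun he => hs12 (by rw [← hi, he, hj])
          exact hnadj (by rw [← hi, ← hj]; exact hclique i j hij)
      obtain ⟨s, hsimp, hsv⟩ := hpick
      by_cases hWH : W \ H ⊆ {s}
      · have hu0s : u0 = s := hWH hu0
        have hsH : s ∉ H := hu0s ▸ hu0.2
        have hd : t ≤ (G.neighborSet s ∩ W).ncard := mindeg hsep hWt hsimp.1
        have hsub2 : G.neighborSet s ∩ W ⊆ G.neighborSet s ∩ H := by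
          rintro z ⟨hz1, hz2⟩
          refine ⟨hz1, ?_⟩
          by_contra hzH
          have : z ∈ W \ H := ⟨hz2, hzH⟩
          have hzs := hWH this
          simp only [Set.mem_singleton_iff] at hzs
          exact G.irrefl (hzs ▸ hz1)
        have h1 : t ≤ (G.neighborSet s ∩ H).ncard :=
          le_trans hd (Set.ncard_le_ncard hsub2 (Set.toFinite _))
        have h2 := hviol s (hu0s ▸ hu0)
        have h3 := hτ s
        have h1' : (t : ℤ) ≤ ((G.neighborSet s ∩ H).ncard : ℤ) := by exact_mod_cast h1
        omega
      · rw [Set.not_subset] at hWH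
        obtain ⟨u1, hu1, hu1s⟩ := hWH
        simp only [Set.mem_singleton_iff] at hu1s
        have hres := ih (W \ {s}) (H \ {s}) v'
          (by
            have := Set.ncard_diff_singleton_lt_of_mem hsimp.1 (Set.toFinite W)
            omega)
          (fun z hz => ⟨hHW hz.1, hz.2⟩)
          (fun i => ⟨hvH i, by simp [hsv i]⟩)
          hinj hclique (sep_del hsep hsimp)
          (by
            intro u hu
            have huW : u ∈ W := hu.1.1
            have hus : u ≠ s := by
              have := hu.1.2
              simpa using this
            have huH : u ∉ H := fun h => hu.2 ⟨h, hu.1.2⟩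
            have h2 := hviol u ⟨huW, huH⟩
            have hsub3 : G.neighborSet u ∩ (H \ {s}) ⊆ G.neighborSet u ∩ H :=
              fun z hz => ⟨hz.1, hz.2.1⟩
            have h4 : (G.neighborSet u ∩ (H \ {s})).ncard ≤
                (G.neighborSet u ∩ H).ncard :=
              Set.ncard_le_ncard hsub3 (Set.toFinite _)
            have h4' : ((G.neighborSet u ∩ (H \ {s})).ncard : ℤ) ≤
                ((G.neighborSet u ∩ H).ncard : ℤ) := by exact_mod_cast h4
            omega)
        have hmem : u1 ∈ (W \ {s}) \ (H \ {s}) :=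
          ⟨⟨hu1.1, by simp [hu1s]⟩, fun h => hu1.2 h.1⟩
        rw [hres] at hmem
        exact hmem


end Stmt6

/-- for a clique `v₀,…,v_{t-1}` of order `t` in a `t`-connected chordal
graph with thresholds at most `t`, the function `σ` with `σ(vᵢ) = τ(vᵢ) - i` and
`σ = 0` elsewhere is a partial incentive, i.e. `H_{(G,τ-σ)}(∅) = V(G)`. -/
theorem stmt_6 {V : Type} [Fintype V] (G : SimpleGraph V) (t : ℕ)
    (hcon : TConnected G t) (hch : IsChordal G)
    (τ : V → ℤ) (hτ : ∀ u : V, τ u ≤ t)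
    (v : Fin t → V) (hinj : Function.Injective v)
    (hclique : ∀ i j : Fin t, i ≠ j → G.Adj (v i) (v j))
    (σ : V → ℤ)
    (hσ1 : ∀ i : Fin t, σ (v i) = τ (v i) - i)
    (hσ2 : ∀ u : V, (∀ i : Fin t, v i ≠ u) → σ u = 0) :
    hull G (fun u => τ u - σ u) ∅ = Set.univ := by
  classical
  have key : ∀ H : Set V, HullClosed G (fun u => τ u - σ u) H → H = Set.univ := by
    intro H hcl
    have hvmem : ∀ k : ℕ, ∀ hk : k < t, v ⟨k, hk⟩ ∈ H := by
      intro k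
      induction k using Nat.strong_induction_on with
      | _ k ihk =>
        intro hk
        have hinj2 : Function.Injective
            (fun j : Fin k => v ⟨j.1, lt_trans j.2 hk⟩) := by
          intro j1 j2 he
          have := hinj he
          simp only [Fin.mk.injEq] at this
          exact Fin.ext this
        have hsubs : (fun j : Fin k => v ⟨j.1, lt_trans j.2 hk⟩) '' Set.univ ⊆
            G.neighborSet (v ⟨k, hk⟩) ∩ H := by
          rintro _ ⟨j, -, rfl⟩
          refine ⟨?_, ihk j.1 j.2 _⟩
          have hne : (⟨k, hk⟩ : Fin t) ≠ ⟨j.1, lt_trans j.2 hk⟩ := by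
            intro he
            simp only [Fin.mk.injEq] at he
            omega
          exact hclique _ _ hne
        have hcard : k ≤ (G.neighborSet (v ⟨k, hk⟩) ∩ H).ncard := by
          have h1 : ((fun j : Fin k => v ⟨j.1, lt_trans j.2 hk⟩) '' Set.univ).ncard
              = k := by
            rw [Set.ncard_image_of_injective _ hinj2, Set.ncard_univ,
              Nat.card_eq_fintype_card, Fintype.card_fin]
          have h2 := Set.ncard_le_ncard hsubs (Set.toFinite
            (G.neighborSet (v ⟨k, hk⟩) ∩ H))
          omega
        apply hcl
        show τ (v ⟨k, hk⟩) - σ (v ⟨k, hk⟩) ≤ ((G.neighborSet (v ⟨k, hk⟩) ∩ H).ncard : ℤ)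
        have hs := hσ1 ⟨k, hk⟩
        have hval : ((⟨k, hk⟩ : Fin t) : ℤ) = (k : ℤ) := by simp
        rw [hval] at hs
        have hcard' : (k : ℤ) ≤ ((G.neighborSet (v ⟨k, hk⟩) ∩ H).ncard : ℤ) := by
          exact_mod_cast hcard
        omega
    have hviol : ∀ u ∈ (Set.univ : Set V) \ H,
        ((G.neighborSet u ∩ H).ncard : ℤ) < τ u := by
      intro u hu
      have hσ0 : σ u = 0 := hσ2 u (fun i he => hu.2 (he ▸ hvmem i.1 i.2))
      by_contra hcon2
      push_neg at hcon2
      refine hu.2 (hcl u ?_)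
      show τ u - σ u ≤ ((G.neighborSet u ∩ H).ncard : ℤ)
      rw [hσ0]
      simpa using hcon2
    have hres := Stmt6.main hch t τ hτ (Set.univ : Set V).ncard Set.univ H v
      le_rfl (Set.subset_univ H) (fun i => hvmem i.1 i.2) hinj
      (fun i j hij => hclique i j hij) (Stmt6.sepge_univ hcon) hviol
    rw [Set.diff_eq_empty] at hres
    exact Set.eq_univ_of_univ_subset hres
  apply Set.eq_univ_of_univ_subset
  intro x _
  rw [hull, Set.mem_sInter]
  rintro H ⟨-, hcl⟩
  rw [key H hcl]
  trivial
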